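/- Let p be an odd prime and G = E_p(p^3). The map f₁ : G × G → Q/Z given by f₁(a^{s₁}b^{t₁}c^{u₁}, a^{s₂}b^{t₂}c^{u₂}) = (u₁s₂ + t₁·s₂(s₂−1)/2)/p mod Z is a 2-cocycle on G with values in Q/Z (with trivial G-action). -/

import Mathlib

/-- The Heisenberg group `G = E_p(p³) = ⟨a,b,c ∣ aᵖ = bᵖ = cᵖ = 1, [b,a] = c, [c,a] = [c,b] = 1⟩`
(the extraspecial group of order `p³` and exponent `p`, for odd `p`): every element has a
unique normal form `a^s b^t c^u`, and we encode it as the triple `(s, t, u)`; the relations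
give `b^t a^s = a^s b^t c^{t s}`, whence the multiplication rule below. -/
@[ext] structure Heis (p : ℕ) where
  s : ZMod p
  t : ZMod p
  u : ZMod p

namespace Heis

variable {p : ℕ}

instance : Group (Heis p) where
  mul x y := ⟨x.s + y.s, x.t + y.t, x.u + y.u + x.t * y.s⟩
  one := ⟨0, 0, 0⟩
  inv x := ⟨-x.s, -x.t, -x.u + x.t * x.s⟩
  mul_assoc x y z := by
    refine Heis.ext (add_assoc _ _ _) (add_assoc _ _ _) ?_
    show x.u + y.u + x.t * y.s + z.u + (x.t + y.t) * z.s
       = x.u + (y.u + z.u + y.t * z.s) + x.t * (y.s + z.s)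
    ring
  one_mul x := by
    refine Heis.ext (zero_add _) (zero_add _) ?_
    show 0 + x.u + 0 * x.s = x.u; ring
  mul_one x := by
    refine Heis.ext (add_zero _) (add_zero _) ?_
    show x.u + 0 + x.t * 0 = x.u; ring
  inv_mul_cancel x := by
    refine Heis.ext (neg_add_cancel _) (neg_add_cancel _) ?_
    show -x.u + x.t * x.s + x.u + -x.t * x.s = 0; ring

@[simp] lemma mul_def (x y : Heis p) :
    x * y = ⟨x.s + y.s, x.t + y.t, x.u + y.u + x.t * y.s⟩ := rfl

@[simp] lemma one_def : (1 : Heis p) = ⟨0, 0, 0⟩ := rfl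

@[simp] lemma inv_def (x : Heis p) : x⁻¹ = ⟨-x.s, -x.t, -x.u + x.t * x.s⟩ := rfl

/-- The generator `a`. -/
def a : Heis p := ⟨1, 0, 0⟩
/-- The generator `b`. -/
def b : Heis p := ⟨0, 1, 0⟩
/-- The generator `c = [b,a] = b⁻¹a⁻¹ba`. -/
def c : Heis p := ⟨0, 0, 1⟩

lemma c_eq_commutator : (c : Heis p) = b⁻¹ * a⁻¹ * b * a := by
  simp [a, b, c]

end Heis

/-- The group `ℚ/ℤ` (realized as `AddCircle (1 : ℚ) = ℚ ⧸ ℤ`). -/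
abbrev QZ := AddCircle (1 : ℚ)

namespace Heis

/-- The 2-cocycle `f₁` on `G = E_p(p³)` with values in `ℚ/ℤ` (trivial action):
`f₁(a^{s₁}b^{t₁}c^{u₁}, a^{s₂}b^{t₂}c^{u₂}) = (u₁s₂ + t₁·s₂(s₂−1)/2)/p mod ℤ`. -/
noncomputable def f₁ (p : ℕ) (g h : Heis p) : QZ :=
  (((g.u.val * h.s.val + g.t.val * (h.s.val * (h.s.val - 1) / 2) : ℕ) : ℚ) / (p : ℚ) : QZ)

/-- The 2-cocycle `f₂` on `G = E_p(p³)` with values in `ℚ/ℤ` (trivial action):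
`f₂(a^{s₁}b^{t₁}c^{u₁}, a^{s₂}b^{t₂}c^{u₂}) = (t₁(t₁−1)/2·s₂ + (t₁s₂ + u₁)t₂)/p mod ℤ`. -/
noncomputable def f₂ (p : ℕ) (g h : Heis p) : QZ :=
  (((g.t.val * (g.t.val - 1) / 2 * h.s.val + (g.t.val * h.s.val + g.u.val) * h.t.val : ℕ) : ℚ)
    / (p : ℚ) : QZ)

end Heis

/-- `f : K × K → A` is a 2-cocycle for the trivial action of the group `K` on the abelian
group `A`: `f(g₁,g₂) + f(g₁g₂,g₃) = f(g₂,g₃) + f(g₁,g₂g₃)`. -/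
def IsTwoCocycle {K : Type*} [Group K] {A : Type*} [AddCommGroup A] (f : K → K → A) : Prop :=
  ∀ g₁ g₂ g₃ : K, f g₁ g₂ + f (g₁ * g₂) g₃ = f g₂ g₃ + f g₁ (g₂ * g₃)

/-- `f : K × K → A` is a 2-coboundary for the trivial action of the group `K` on the abelian
group `A`: `f(g,h) = φ(h) − φ(gh) + φ(g)` for some `φ : K → A`. -/
def IsTwoCoboundary {K : Type*} [Group K] {A : Type*} [AddCommGroup A] (f : K → K → A) : Prop :=
  ∃ φ : K → A, ∀ g h : K, f g h = φ h - φ (g * h) + φ g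


lemma coe_div_congr (p : ℕ) (hp : p ≠ 0) {m n : ℕ} (h : (m : ZMod p) = (n : ZMod p)) :
    (((m : ℚ) / p : ℚ) : QZ) = (((n : ℚ) / p : ℚ) : QZ) := by
  rw [ZMod.natCast_eq_natCast_iff] at h
  obtain ⟨k, hk⟩ := (Nat.modEq_iff_dvd).mp h
  have hq : (n : ℚ) / p - (m : ℚ) / p = (k : ℚ) := by
    have : (n : ℚ) - m = p * k := by exact_mod_cast congrArg (Int.cast : ℤ → ℚ) hk
    field_simp
    linarith
  have : (((n : ℚ) / p : ℚ) : QZ) - (((m : ℚ) / p : ℚ) : QZ) = (((k:ℚ) : ℚ) : QZ) := by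
    rw [← hq]; rfl
  have hz : (((k:ℚ)) : QZ) = 0 := by
    rw [AddCircle.coe_eq_zero_iff]; exact ⟨k, by simp⟩
  rw [hz] at this
  exact (sub_eq_zero.mp this).symm

lemma two_ne (p : ℕ) [Fact p.Prime] (hodd : Odd p) : (2 : ZMod p) ≠ 0 := by
  intro h
  have h' : ((2:ℕ) : ZMod p) = 0 := by exact_mod_cast h
  have := (ZMod.natCast_eq_zero_iff 2 p).mp h'
  have hp2 := (Fact.out : p.Prime).two_le
  have := Nat.le_of_dvd (by norm_num) this
  rw [Nat.odd_iff] at hodd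
  omega

lemma tri_cast (p : ℕ) [Fact p.Prime] (hodd : Odd p) (n : ℕ) :
    ((n * (n - 1) / 2 : ℕ) : ZMod p) = (n : ZMod p) * ((n : ZMod p) - 1) / 2 := by
  have h2 := two_ne p hodd
  have hev : 2 ∣ n * (n - 1) := by
    rcases Nat.even_or_odd n with h | h
    · exact Dvd.dvd.mul_right h.two_dvd _
    · rcases n with _ | m
      · simp
      · exact Dvd.dvd.mul_left (Nat.Odd.sub_odd h odd_one).two_dvd _
  rw [eq_div_iff h2]
  have : ((n * (n - 1) / 2 : ℕ) : ZMod p) * 2 = ((n * (n - 1) / 2 * 2 : ℕ) : ZMod p) := by push_cast; ring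
  rw [this, Nat.div_mul_cancel hev]
  rcases n with _ | m
  · simp
  · push_cast [Nat.succ_sub_one]
    ring

/-- For an odd prime `p` and `G = E_p(p³)`, the map
`f₁(a^{s₁}b^{t₁}c^{u₁}, a^{s₂}b^{t₂}c^{u₂}) = (u₁s₂ + t₁·s₂(s₂−1)/2)/p mod ℤ`
is a 2-cocycle on `G` with values in `ℚ/ℤ` (trivial `G`-action). -/
theorem f₁_isTwoCocycle (p : ℕ) (hp : p.Prime) (hodd : Odd p) :
    IsTwoCocycle (Heis.f₁ p) := by
  haveI := Fact.mk hp
  have hp0 : p ≠ 0 := hp.pos.ne'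
  intro g₁ g₂ g₃
  unfold Heis.f₁
  rw [show ∀ x y : ℚ, ((x : QZ) + (y : QZ)) = ((x + y : ℚ) : QZ) from fun _ _ => rfl,
      show ∀ x y : ℚ, ((x : QZ) + (y : QZ)) = ((x + y : ℚ) : QZ) from fun _ _ => rfl,
      ← add_div, ← add_div, ← Nat.cast_add, ← Nat.cast_add]
  apply coe_div_congr p hp0
  push_cast [tri_cast p hodd, ZMod.natCast_val, ZMod.cast_id]
  simp only [Heis.mul_def]
  have h2 := two_ne p hodd
  field_simp
  ring
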